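/- Let μ be a probability measure on ℝ × ℝ^k (not necessarily a product), write x = (x₁, x⊥), let c > 0, assume μ({x : x₁ = 0}) = 0 and ∫ ‖x⊥‖² dμ < ∞, and let labels be generated by the calibrated logistic model with w* = c·e₁. Define Err = ∫ min(σ(c·x₁), 1−σ(c·x₁)) dμ, m = ∫ σ(c·x₁)·(1−σ(c·x₁)) dμ, A = ∫ σ(c·x₁)·(1−σ(c·x₁))·x⊥·x⊥ᵀ dμ, and C₁ = A/m (assume m > 0). Let C₀ be a positive definite k×k matrix and s > 0 with ‖C₀^{−1/2} C₁ C₀^{−1/2}‖₂ ≤ 1/s. Then A ⪯ (Err/s)·C₀, equivalently (s/(4·Err))·A ⪯ (1/4)·C₀, in the Loewner order. -/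

import Mathlib

open MeasureTheory
open scoped Matrix.Norms.L2Operator

section
open scoped ComplexOrder

/-- The square root of a positive semidefinite matrix, as defined in the older Mathlib
(removed since). -/
noncomputable def Matrix.PosSemidef.sqrt {n : Type*} [Fintype n] [DecidableEq n]
    {𝕜 : Type*} [RCLike 𝕜] {A : Matrix n n 𝕜} (hA : A.PosSemidef) : Matrix n n 𝕜 :=
  hA.1.eigenvectorUnitary.1 * Matrix.diagonal ((↑) ∘ (√·) ∘ hA.1.eigenvalues) *
    (star hA.1.eigenvectorUnitary : Matrix n n 𝕜)

end

/-- The logistic sigmoid `σ(a) = 1 / (1 + exp (−a))`. -/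
noncomputable def sigmoid (a : ℝ) : ℝ := 1 / (1 + Real.exp (-a))

open scoped Matrix

lemma sigmoid_pos (a : ℝ) : 0 < sigmoid a := by
  unfold sigmoid; positivity

lemma sigmoid_lt_one (a : ℝ) : sigmoid a < 1 := by
  unfold sigmoid
  rw [div_lt_one (by positivity)]
  linarith [Real.exp_pos (-a)]

lemma sigmoid_continuous : Continuous sigmoid := by
  unfold sigmoid
  exact continuous_const.div (by fun_prop) (fun a => by positivity)

lemma psd_smul {k : ℕ} {M : Matrix (Fin k) (Fin k) ℝ} (hM : M.PosSemidef) {t : ℝ} (ht : 0 ≤ t) :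
    (t • M).PosSemidef := by
  refine Matrix.PosSemidef.of_dotProduct_mulVec_nonneg ?_ fun x => ?_
  · unfold Matrix.IsHermitian
    rw [Matrix.conjTranspose_smul, hM.1.eq]
    simp
  · rw [Matrix.smul_mulVec, dotProduct_smul, smul_eq_mul]
    exact mul_nonneg ht (hM.dotProduct_mulVec_nonneg x)

lemma coord_abs_le_norm {k : ℕ} (y : EuclideanSpace ℝ (Fin k)) (i : Fin k) : |y i| ≤ ‖y‖ := by
  rw [EuclideanSpace.norm_eq, ← Real.sqrt_sq_eq_abs]
  apply Real.sqrt_le_sqrt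
  have := Finset.single_le_sum (f := fun j => ‖y j‖ ^ 2) (fun j _ => by positivity)
    (Finset.mem_univ i)
  simpa [Real.norm_eq_abs, sq_abs] using this

lemma psd_of_norm_le {k : ℕ} {M : Matrix (Fin k) (Fin k) ℝ} (hM : M.IsHermitian) {t : ℝ}
    (ht : ‖M‖ ≤ t) : (t • (1 : Matrix (Fin k) (Fin k) ℝ) - M).PosSemidef := by
  refine Matrix.PosSemidef.of_dotProduct_mulVec_nonneg ?_ fun x => ?_
  · unfold Matrix.IsHermitian
    rw [Matrix.conjTranspose_sub, Matrix.conjTranspose_smul, hM.eq]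
    simp
  · have hx0 : (star x : Fin k → ℝ) = x := by simp
    set w : EuclideanSpace ℝ (Fin k) := (EuclideanSpace.equiv (Fin k) ℝ).symm x with hw
    set u : EuclideanSpace ℝ (Fin k) := (EuclideanSpace.equiv (Fin k) ℝ).symm (M *ᵥ x) with hu
    have hinner : x ⬝ᵥ (M *ᵥ x) = (inner ℝ w u : ℝ) := by
      rw [PiLp.inner_apply]
      simp [dotProduct, hw, hu, mul_comm]
    have hxx : x ⬝ᵥ x = ‖w‖ ^ 2 := by
      rw [← real_inner_self_eq_norm_sq, PiLp.inner_apply]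
      simp [dotProduct, hw, sq]
    have hub : ‖u‖ ≤ ‖M‖ * ‖w‖ := M.l2_opNorm_mulVec w
    have h2 : (inner ℝ w u : ℝ) ≤ ‖w‖ * ‖u‖ := real_inner_le_norm w u
    have hMn : (0:ℝ) ≤ ‖M‖ := norm_nonneg _
    have hwn : (0:ℝ) ≤ ‖w‖ := norm_nonneg _
    rw [hx0, Matrix.sub_mulVec, dotProduct_sub, Matrix.smul_mulVec,
      Matrix.one_mulVec, dotProduct_smul, smul_eq_mul, hinner, hxx]
    nlinarith

lemma loewner_of_norm_le {k : ℕ} {S C₁ C₀ : Matrix (Fin k) (Fin k) ℝ} {s : ℝ}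
    (hC₁psd : C₁.PosSemidef) (hS_herm : S.IsHermitian) (hSS : S * S = C₀)
    (hSdet : IsUnit S.det) (hnorm : ‖S⁻¹ * C₁ * S⁻¹‖ ≤ 1 / s) :
    ((1 / s) • C₀ - C₁).PosSemidef := by
  have hSinv : S * S⁻¹ = 1 := Matrix.mul_nonsing_inv _ hSdet
  have hinvS : S⁻¹ * S = 1 := Matrix.nonsing_inv_mul _ hSdet
  have hSinv_herm : (S⁻¹).IsHermitian := hS_herm.inv
  have hBpsd : (S⁻¹ * C₁ * S⁻¹).PosSemidef := by
    have := hC₁psd.conjTranspose_mul_mul_same S⁻¹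
    rwa [hSinv_herm.eq] at this
  have h1 : ((1 / s) • (1 : Matrix (Fin k) (Fin k) ℝ) - S⁻¹ * C₁ * S⁻¹).PosSemidef :=
    psd_of_norm_le hBpsd.1 hnorm
  have h2 : (S * ((1 / s) • (1 : Matrix (Fin k) (Fin k) ℝ) - S⁻¹ * C₁ * S⁻¹) * S).PosSemidef := by
    have := h1.mul_mul_conjTranspose_same S
    rwa [hS_herm.eq] at this
  have h3 : S * ((1 / s) • (1 : Matrix (Fin k) (Fin k) ℝ) - S⁻¹ * C₁ * S⁻¹) * S
      = (1 / s) • C₀ - C₁ := by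
    rw [Matrix.mul_sub, Matrix.sub_mul]
    congr 1
    · rw [Matrix.mul_smul, Matrix.smul_mul, Matrix.mul_one, hSS]
    · calc S * (S⁻¹ * C₁ * S⁻¹) * S = S * S⁻¹ * C₁ * (S⁻¹ * S) := by
            simp only [Matrix.mul_assoc]
        _ = C₁ := by rw [hSinv, hinvS, Matrix.one_mul, Matrix.mul_one]
  exact h3 ▸ h2

lemma psd_sqrt_isHermitian {k : ℕ} {C : Matrix (Fin k) (Fin k) ℝ} (hC : C.PosSemidef) :
    hC.sqrt.IsHermitian := by
  unfold Matrix.PosSemidef.sqrt Matrix.IsHermitian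
  simp [Matrix.conjTranspose_mul, Matrix.mul_assoc, Matrix.star_eq_conjTranspose]

lemma psd_sqrt_mul_self {k : ℕ} {C : Matrix (Fin k) (Fin k) ℝ} (hC : C.PosSemidef) :
    hC.sqrt * hC.sqrt = C := by
  unfold Matrix.PosSemidef.sqrt
  have hUU : (star hC.1.eigenvectorUnitary : Matrix (Fin k) (Fin k) ℝ) *
      (hC.1.eigenvectorUnitary : Matrix (Fin k) (Fin k) ℝ) = 1 :=
    Unitary.coe_star_mul_self _
  have hconj : ∀ X Y : Matrix (Fin k) (Fin k) ℝ,
      ((hC.1.eigenvectorUnitary : Matrix (Fin k) (Fin k) ℝ) * X *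
        (star hC.1.eigenvectorUnitary : Matrix (Fin k) (Fin k) ℝ)) *
      ((hC.1.eigenvectorUnitary : Matrix (Fin k) (Fin k) ℝ) * Y *
        (star hC.1.eigenvectorUnitary : Matrix (Fin k) (Fin k) ℝ)) =
      (hC.1.eigenvectorUnitary : Matrix (Fin k) (Fin k) ℝ) * (X * Y) *
        (star hC.1.eigenvectorUnitary : Matrix (Fin k) (Fin k) ℝ) := by
    intro X Y
    calc _ = (hC.1.eigenvectorUnitary : Matrix (Fin k) (Fin k) ℝ) * X *
          ((star hC.1.eigenvectorUnitary : Matrix (Fin k) (Fin k) ℝ) *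
            (hC.1.eigenvectorUnitary : Matrix (Fin k) (Fin k) ℝ)) * Y *
          (star hC.1.eigenvectorUnitary : Matrix (Fin k) (Fin k) ℝ) := by
          simp only [Matrix.mul_assoc]
      _ = _ := by rw [hUU, Matrix.mul_one]; simp only [Matrix.mul_assoc]
  rw [hconj, Matrix.diagonal_mul_diagonal]
  conv_rhs => rw [hC.1.spectral_theorem, Unitary.conjStarAlgAut_apply]
  congr 3
  ext i
  simp [Real.mul_self_sqrt (hC.eigenvalues_nonneg i)]

set_option maxHeartbeats 1000000 in
/-- Let `μ` be a probability measure on `ℝ × ℝᵏ` (not necessarily a product) with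
`μ({x₁ = 0}) = 0` and `∫ ‖x⊥‖² dμ < ∞`, labels generated by the calibrated logistic
model with `w* = c e₁`, `c > 0`. With `Err = ∫ min (σ(c x₁)) (1 − σ(c x₁)) dμ`,
`m = ∫ σ(c x₁)(1 − σ(c x₁)) dμ > 0`, `A = ∫ σ(c x₁)(1 − σ(c x₁)) x⊥ x⊥ᵀ dμ`,
`C₁ = A / m`, and `C₀` positive definite with `‖C₀^{−1/2} C₁ C₀^{−1/2}‖₂ ≤ 1/s` for
some `s > 0`, we have `A ⪯ (Err / s) C₀`, equivalently
`(s / (4 Err)) A ⪯ (1/4) C₀`, in the Loewner order. This is the key matrix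
inequality `Σ_passive,−1 ≻ (s/(4 Err)) Σ_active,−1` behind `DE(ε) > s/(4 Err)`. -/
theorem key_matrix_inequality {k : ℕ} (μ : Measure (ℝ × EuclideanSpace ℝ (Fin k)))
    [IsProbabilityMeasure μ] (c : ℝ) (hc : 0 < c)
    (h0 : μ {x : ℝ × EuclideanSpace ℝ (Fin k) | x.1 = 0} = 0)
    (hint : Integrable (fun x : ℝ × EuclideanSpace ℝ (Fin k) => ‖x.2‖ ^ 2) μ)
    (Err : ℝ) (hErr_def : Err = ∫ x, min (sigmoid (c * x.1)) (1 - sigmoid (c * x.1)) ∂μ)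
    (m : ℝ) (hm_def : m = ∫ x, sigmoid (c * x.1) * (1 - sigmoid (c * x.1)) ∂μ)
    (hm_pos : 0 < m)
    (A C₁ : Matrix (Fin k) (Fin k) ℝ)
    (hA : A = Matrix.of fun i j : Fin k =>
        ∫ x, sigmoid (c * x.1) * (1 - sigmoid (c * x.1)) * (x.2 i * x.2 j) ∂μ)
    (hC₁ : C₁ = m⁻¹ • A)
    (C₀ : Matrix (Fin k) (Fin k) ℝ) (hC₀ : C₀.PosDef) (s : ℝ) (hs : 0 < s)
    (hnorm : ‖(hC₀.posSemidef.sqrt)⁻¹ * C₁ * (hC₀.posSemidef.sqrt)⁻¹‖ ≤ 1 / s) :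
    ((Err / s) • C₀ - A).PosSemidef ∧
      ((1 / 4 : ℝ) • C₀ - (s / (4 * Err)) • A).PosSemidef := by
  classical
  -- notation
  set g : ℝ × EuclideanSpace ℝ (Fin k) → ℝ :=
    fun x => sigmoid (c * x.1) * (1 - sigmoid (c * x.1)) with hg
  have hg_cont : Continuous g := by
    apply Continuous.mul
    · exact sigmoid_continuous.comp (continuous_const.mul continuous_fst)
    · exact continuous_const.sub (sigmoid_continuous.comp (continuous_const.mul continuous_fst))
  have hg_nonneg : ∀ x, 0 ≤ g x := fun x =>
    mul_nonneg (sigmoid_pos _).le (by linarith [sigmoid_lt_one (c * x.1)])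
  have hgx : ∀ x, g x = sigmoid (c * x.1) * (1 - sigmoid (c * x.1)) := fun x => rfl
  have hg_le : ∀ x, g x ≤ min (sigmoid (c * x.1)) (1 - sigmoid (c * x.1)) := by
    intro x
    have h1 := sigmoid_pos (c * x.1)
    have h2 := sigmoid_lt_one (c * x.1)
    rw [hgx]
    apply le_min
    · nlinarith
    · nlinarith
  -- m ≤ Err
  have hg_int : Integrable g μ := by
    apply Integrable.mono' (integrable_const (1 : ℝ)) hg_cont.aestronglyMeasurable
    filter_upwards with x
    have h1 := sigmoid_pos (c * x.1)
    have h2 := sigmoid_lt_one (c * x.1)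
    rw [Real.norm_eq_abs, abs_of_nonneg (hg_nonneg x), hgx]
    nlinarith
  have hmin_int : Integrable
      (fun x : ℝ × EuclideanSpace ℝ (Fin k) =>
        min (sigmoid (c * x.1)) (1 - sigmoid (c * x.1))) μ := by
    apply Integrable.mono' (integrable_const (1 : ℝ))
    · exact ((sigmoid_continuous.comp (continuous_const.mul continuous_fst)).min
        (continuous_const.sub
          (sigmoid_continuous.comp (continuous_const.mul continuous_fst)))).aestronglyMeasurable
    · filter_upwards with x
      have h1 := sigmoid_pos (c * x.1)
      have h2 := sigmoid_lt_one (c * x.1)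
      rw [Real.norm_eq_abs, abs_of_nonneg (le_min h1.le (by linarith))]
      exact (min_le_left _ _).trans h2.le
  have hmErr : m ≤ Err := by
    rw [hm_def, hErr_def]
    exact integral_mono hg_int hmin_int hg_le
  have hErr_pos : 0 < Err := lt_of_lt_of_le hm_pos hmErr
  -- coordinates are continuous
  have hcoord : ∀ i : Fin k,
      Continuous (fun x : ℝ × EuclideanSpace ℝ (Fin k) => x.2 i) := by
    intro i
    exact (EuclideanSpace.proj i).continuous.comp continuous_snd
  -- integrability of entries
  have hFint : ∀ i j : Fin k,
      Integrable (fun x : ℝ × EuclideanSpace ℝ (Fin k) => g x * (x.2 i * x.2 j)) μ := by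
    intro i j
    apply Integrable.mono' hint
      (hg_cont.mul ((hcoord i).mul (hcoord j))).aestronglyMeasurable
    filter_upwards with x
    have h1 := sigmoid_pos (c * x.1)
    have h2 := sigmoid_lt_one (c * x.1)
    have hbi := coord_abs_le_norm x.2 i
    have hbj := coord_abs_le_norm x.2 j
    have hgle1 : g x ≤ 1 := by rw [hgx]; nlinarith
    show ‖g x * (x.2 i * x.2 j)‖ ≤ ‖x.2‖ ^ 2
    rw [Real.norm_eq_abs, abs_mul, abs_of_nonneg (hg_nonneg x), abs_mul]
    have hcs : |x.2 i| * |x.2 j| ≤ ‖x.2‖ * ‖x.2‖ :=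
      mul_le_mul hbi hbj (abs_nonneg _) (norm_nonneg _)
    calc g x * (|x.2 i| * |x.2 j|) ≤ 1 * (‖x.2‖ * ‖x.2‖) :=
          mul_le_mul hgle1 hcs (by positivity) one_pos.le
      _ = ‖x.2‖ ^ 2 := by ring
  -- A is positive semidefinite
  have hApsd : A.PosSemidef := by
    refine Matrix.PosSemidef.of_dotProduct_mulVec_nonneg ?_ ?_
    · rw [hA]
      unfold Matrix.IsHermitian
      ext i j
      simp only [Matrix.conjTranspose_apply, Matrix.of_apply, star_trivial]
      congr 1
      ext x
      ring
    · intro v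
      have hstar : (star v : Fin k → ℝ) = v := by simp
      have key : (star v) ⬝ᵥ (A *ᵥ v)
          = ∫ x, g x * (∑ i, v i * x.2 i) ^ 2 ∂μ := by
        rw [hstar]
        have expand : ∀ x : ℝ × EuclideanSpace ℝ (Fin k),
            g x * (∑ i, v i * x.2 i) ^ 2
              = ∑ i, ∑ j, (v i * v j) * (g x * (x.2 i * x.2 j)) := by
          intro x
          rw [sq, Finset.sum_mul_sum, Finset.mul_sum]
          refine Finset.sum_congr rfl fun i _ => ?_
          rw [Finset.mul_sum]
          refine Finset.sum_congr rfl fun j _ => ?_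
          ring
        calc v ⬝ᵥ (A *ᵥ v) = ∑ i, ∑ j, (v i * v j) * ∫ x, g x * (x.2 i * x.2 j) ∂μ := by
              simp only [dotProduct, Matrix.mulVec, hA, Matrix.of_apply, hg]
              refine Finset.sum_congr rfl fun i _ => ?_
              rw [Finset.mul_sum]
              refine Finset.sum_congr rfl fun j _ => ?_
              ring
          _ = ∑ i, ∑ j, ∫ x, (v i * v j) * (g x * (x.2 i * x.2 j)) ∂μ := by
              refine Finset.sum_congr rfl fun i _ => Finset.sum_congr rfl fun j _ => ?_
              rw [integral_const_mul]
          _ = ∫ x, ∑ i, ∑ j, (v i * v j) * (g x * (x.2 i * x.2 j)) ∂μ := by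
              rw [integral_finset_sum]
              · exact Finset.sum_congr rfl fun i _ => by
                  rw [integral_finset_sum]
                  intro j _
                  exact (hFint i j).const_mul _
              · intro i _
                exact integrable_finset_sum _ fun j _ => (hFint i j).const_mul _
          _ = ∫ x, g x * (∑ i, v i * x.2 i) ^ 2 ∂μ := by
              congr 1
              ext x
              rw [expand]
      rw [key]
      exact integral_nonneg fun x => mul_nonneg (hg_nonneg x) (sq_nonneg _)
  -- C₁ is positive semidefinite
  have hC₁psd : C₁.PosSemidef := by
    rw [hC₁]; exact psd_smul hApsd (inv_nonneg.mpr hm_pos.le)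
  -- square root of C₀
  have hS_herm : (hC₀.posSemidef.sqrt).IsHermitian := psd_sqrt_isHermitian hC₀.posSemidef
  have hSS : hC₀.posSemidef.sqrt * hC₀.posSemidef.sqrt = C₀ := psd_sqrt_mul_self hC₀.posSemidef
  have hSdet : IsUnit (hC₀.posSemidef.sqrt).det := by
    have hdet : (hC₀.posSemidef.sqrt).det * (hC₀.posSemidef.sqrt).det = C₀.det := by
      rw [← Matrix.det_mul, hSS]
    have hpos : C₀.det > 0 := hC₀.det_pos
    refine isUnit_iff_ne_zero.mpr fun h => ?_
    rw [h, mul_zero] at hdet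
    linarith [hdet ▸ hpos]
  have h4 : ((1 / s) • C₀ - C₁).PosSemidef :=
    loewner_of_norm_le hC₁psd hS_herm hSS hSdet hnorm
  -- scale by m
  have h5 : ((m / s) • C₀ - A).PosSemidef := by
    have hsc := psd_smul h4 hm_pos.le
    have heq : m • ((1 / s) • C₀ - C₁) = (m / s) • C₀ - A := by
      rw [smul_sub, smul_smul, hC₁, smul_smul, mul_inv_cancel₀ hm_pos.ne', one_smul]
      congr 1
      congr 1
      ring
    rwa [heq] at hsc
  -- first conclusion
  have hfirst : ((Err / s) • C₀ - A).PosSemidef := by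
    have hsplit : (Err / s) • C₀ - A
        = ((Err - m) / s) • C₀ + ((m / s) • C₀ - A) := by
      have : (Err / s) • C₀ = ((Err - m) / s) • C₀ + (m / s) • C₀ := by
        rw [← add_smul]; congr 1; field_simp; ring
      rw [this]; abel
    rw [hsplit]
    exact (psd_smul hC₀.posSemidef (div_nonneg (by linarith) hs.le)).add h5
  refine ⟨hfirst, ?_⟩
  have hsc := psd_smul hfirst (show (0:ℝ) ≤ s / (4 * Err) by positivity)
  have heq : (s / (4 * Err)) • ((Err / s) • C₀ - A)
      = (1 / 4 : ℝ) • C₀ - (s / (4 * Err)) • A := by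
    rw [smul_sub, smul_smul]
    congr 2
    field_simp
  rwa [heq] at hsc
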